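/- Let H be a complex Hilbert space and let T : H → H be a bounded linear operator that satisfies a Gårding inequality and is injective. Let (V_N)_{N∈ℕ} be a nondecreasing sequence of finite-dimensional subspaces of H whose union is dense in H. Then there exist N₀ ∈ ℕ and a constant C > 0 such that for every N ≥ N₀ and every f ∈ H the Galerkin problem — find u_N ∈ V_N with ⟨T u_N, w⟩ = ⟨f, w⟩ for all w ∈ V_N — has a unique solution u_N ∈ V_N, and this solution satisfies the quasi-optimal error estimate ‖u_N − u‖ ≤ C · inf_{w ∈ V_N} ‖w − u‖, where u ∈ H is the unique solution of T u = f. -/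

import Mathlib

open Metric Filter
open scoped Topology

section GQAux

variable {H : Type*} [NormedAddCommGroup H] [InnerProductSpace ℂ H]

local notation "⟪" x ", " y "⟫" => @inner ℂ _ _ x y

private lemma gq_re_le (z : ℂ) : z.re ≤ ‖z‖ := by
  exact Complex.re_le_norm z

/-- From coercivity, a vector on which the form vanishes against itself is zero. -/
private lemma gq_zero (S : H →L[ℂ] H) (hcoer : ∀ v : H, ‖v‖ ^ 2 ≤ (⟪S v, v⟫).re)
    (v : H) (h0 : ⟪S v, v⟫ = 0) : v = 0 := by
  have h1 : ‖v‖ ^ 2 ≤ 0 := by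
    have := hcoer v
    rw [h0] at this
    simpa using this
  have : ‖v‖ = 0 := by nlinarith [norm_nonneg v]
  exact norm_eq_zero.mp this

/-- Coercivity implies the operator is bounded below in norm. -/
private lemma gq_low (S : H →L[ℂ] H) (hcoer : ∀ v : H, ‖v‖ ^ 2 ≤ (⟪S v, v⟫).re)
    (v : H) : ‖v‖ ≤ ‖S v‖ := by
  have h1 := hcoer v
  have h2 : (⟪S v, v⟫).re ≤ ‖S v‖ * ‖v‖ :=
    le_trans (gq_re_le _) (norm_inner_le_norm _ _)
  rcases eq_or_lt_of_le (norm_nonneg v) with h | h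
  · rw [← h]; exact norm_nonneg _
  · nlinarith

/-- Coercivity implies surjectivity (Lax–Milgram style). -/
private lemma gq_surj [CompleteSpace H] (S : H →L[ℂ] H)
    (hcoer : ∀ v : H, ‖v‖ ^ 2 ≤ (⟪S v, v⟫).re) : Function.Surjective S := by
  have hanti : AntilipschitzWith 1 S :=
    S.antilipschitz_of_bound (fun x => by simpa using gq_low S hcoer x)
  have hclosed : IsClosed (Set.range S) := hanti.isClosed_range S.uniformContinuous
  set R : Submodule ℂ H := LinearMap.range (S : H →ₗ[ℂ] H) with hR
  have hRclosed : IsClosed (R : Set H) := by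
    simpa [hR, LinearMap.coe_range] using hclosed
  haveI : CompleteSpace R := hRclosed.completeSpace_coe
  have hbot : Rᗮ = ⊥ := by
    rw [Submodule.eq_bot_iff]
    intro w hw
    have h0 : ⟪S w, w⟫ = 0 :=
      (Submodule.mem_orthogonal R w).mp hw (S w) (LinearMap.mem_range_self _ w)
    exact gq_zero S hcoer w h0
  have hRT : R = ⊤ := Submodule.orthogonal_eq_bot_iff.mp hbot
  intro y
  have : y ∈ R := hRT ▸ Submodule.mem_top
  exact this

/-- Projection identity: the inner product against a member of `W` sees only the projection. -/
private lemma gq_proj (W : Submodule ℂ H) [CompleteSpace W] (x w : H) (hw : w ∈ W) :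
    ⟪x, w⟫ = ⟪((W.orthogonalProjectionOnto x : W) : H), w⟫ := by
  have h := Submodule.starProjection_inner_eq_zero (K := W) x w hw
  rw [inner_sub_left, ← Submodule.coe_orthogonalProjectionOnto_apply] at h
  linear_combination h

/-- Existence of the discrete Galerkin solution for a coercive operator. -/
private lemma gq_exists (S : H →L[ℂ] H) (hcoer : ∀ v : H, ‖v‖ ^ 2 ≤ (⟪S v, v⟫).re)
    (W : Submodule ℂ H) [FiniteDimensional ℂ W] (g : H) :
    ∃ v : H, v ∈ W ∧ ∀ w ∈ W, ⟪S v, w⟫ = ⟪g, w⟫ := by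
  haveI : CompleteSpace W := FiniteDimensional.complete ℂ W
  let P := W.orthogonalProjectionOnto
  let Φ : W →ₗ[ℂ] W :=
    { toFun := fun v => P (S v)
      map_add' := by
        intro a b
        simp [P, Submodule.coe_add, map_add]
      map_smul' := by
        intro c a
        simp [P, Submodule.coe_smul, map_smul] }
  have hker : ∀ v : W, Φ v = 0 → v = 0 := by
    intro v hv
    have hv' : ((P (S (v : H)) : W) : H) = 0 := by
      rw [show P (S (v : H)) = (0 : W) from hv]; simp
    have h0 : ⟪S (v : H), (v : H)⟫ = 0 := by
      rw [gq_proj W (S (v : H)) (v : H) v.2]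
      rw [hv']
      simp
    have := gq_zero S hcoer (v : H) h0
    exact Subtype.ext this
  have hinj : Function.Injective Φ := by
    rw [← LinearMap.ker_eq_bot]
    exact LinearMap.ker_eq_bot'.mpr hker
  obtain ⟨v, hv⟩ := (LinearMap.injective_iff_surjective).mp hinj (P g)
  refine ⟨(v : H), v.2, fun w hw => ?_⟩
  rw [gq_proj W (S (v : H)) w hw, gq_proj W g w hw]
  have : ((Φ v : W) : H) = ((P g : W) : H) := by rw [hv]
  exact by rw [show ((P (S (v : H)) : W) : H) = ((P g : W) : H) from this]

/-- Céa's lemma: quasi-optimality of discrete solutions of coercive problems. -/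
private lemma gq_cea (S : H →L[ℂ] H) (hcoer : ∀ v : H, ‖v‖ ^ 2 ≤ (⟪S v, v⟫).re)
    (W : Submodule ℂ H) (u v : H) (hv : v ∈ W)
    (horth : ∀ w ∈ W, ⟪S (v - u), w⟫ = 0) :
    ‖v - u‖ ≤ (‖S‖ + 1) * Metric.infDist u (W : Set H) := by
  set e := v - u with he
  have hS1 : (0 : ℝ) < ‖S‖ + 1 := by positivity
  have hkey : ∀ w ∈ W, ‖e‖ ^ 2 ≤ (‖S‖ + 1) * ‖e‖ * dist u w := by
    intro w hw
    have h1 : ⟪S e, e⟫ = ⟪S e, w - u⟫ := by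
      have hsplit : e = (v - w) + (w - u) := by rw [he]; abel
      calc ⟪S e, e⟫ = ⟪S e, (v - w) + (w - u)⟫ := by rw [← hsplit]
        _ = ⟪S e, v - w⟫ + ⟪S e, w - u⟫ := inner_add_right _ _ _
        _ = ⟪S e, w - u⟫ := by rw [horth (v - w) (Submodule.sub_mem W hv hw), zero_add]
    have h2 : ‖e‖ ^ 2 ≤ (⟪S e, e⟫).re := hcoer e
    have h3 : (⟪S e, w - u⟫).re ≤ ‖S e‖ * ‖w - u‖ :=
      le_trans (gq_re_le _) (norm_inner_le_norm _ _)
    have h4 : ‖S e‖ ≤ ‖S‖ * ‖e‖ := S.le_opNorm e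
    have h5 : ‖w - u‖ = dist u w := by rw [dist_eq_norm, norm_sub_rev]
    have h6 : (0 : ℝ) ≤ ‖w - u‖ := norm_nonneg _
    nlinarith [norm_nonneg e, norm_nonneg (S e), h2, h1 ▸ h2]
  have hne : (W : Set H).Nonempty := ⟨0, W.zero_mem⟩
  rcases eq_or_lt_of_le (norm_nonneg e) with h | h
  · rw [← h]
    exact mul_nonneg (le_of_lt hS1) Metric.infDist_nonneg
  · have hd : ∀ w ∈ W, ‖e‖ / (‖S‖ + 1) ≤ dist u w := by
      intro w hw
      rw [div_le_iff₀ hS1]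
      have := hkey w hw
      nlinarith
    have hinf : ‖e‖ / (‖S‖ + 1) ≤ Metric.infDist u (W : Set H) := by
      by_contra hlt
      push_neg at hlt
      obtain ⟨w, hw, hwd⟩ := (Metric.infDist_lt_iff hne).mp hlt
      exact absurd (hd w hw) (not_le.mpr hwd)
    calc ‖e‖ = (‖e‖ / (‖S‖ + 1)) * (‖S‖ + 1) := by field_simp
      _ ≤ Metric.infDist u (W : Set H) * (‖S‖ + 1) :=
        mul_le_mul_of_nonneg_right hinf (le_of_lt hS1)
      _ = (‖S‖ + 1) * Metric.infDist u (W : Set H) := mul_comm _ _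

/-- Distances to a monotone dense family of subspaces tend to zero. -/
private lemma gq_tendsto (V : ℕ → Submodule ℂ H) (hmono : Monotone V)
    (hdense : Dense (⋃ N, (V N : Set H))) (u : H) :
    Tendsto (fun N => Metric.infDist u ((V N : Set H))) atTop (𝓝 0) := by
  rw [Metric.tendsto_atTop]
  intro ε hε
  have hu : u ∈ closure (⋃ N, (V N : Set H)) := hdense u
  obtain ⟨y, hy, hyd⟩ := Metric.mem_closure_iff.mp hu ε hε
  obtain ⟨s, ⟨M, rfl⟩, hyM⟩ := hy
  refine ⟨M, fun N hN => ?_⟩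
  have hyN : y ∈ (V N : Set H) := hmono hN hyM
  have h1 : Metric.infDist u ((V N : Set H)) ≤ dist u y :=
    Metric.infDist_le_dist_of_mem hyN
  have h0 : (0 : ℝ) ≤ Metric.infDist u ((V N : Set H)) := Metric.infDist_nonneg
  rw [Real.dist_eq, abs_of_nonneg (by simpa using h0)]
  simpa using lt_of_le_of_lt h1 hyd

end GQAux

/-- Abstract quasi-optimal convergence of Galerkin discretizations for a bounded
linear operator on a complex Hilbert space satisfying a Gårding inequality. -/
theorem galerkin_quasi_optimal
    {H : Type*} [NormedAddCommGroup H] [InnerProductSpace ℂ H] [CompleteSpace H]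
    (T : H →L[ℂ] H)
    (hGarding : ∃ K : H →L[ℂ] H, IsCompactOperator (⇑K) ∧
      ∀ v : H, ((inner ℂ (T v) v : ℂ)).re ≥ ‖v‖ ^ 2 - ((inner ℂ (K v) v : ℂ)).re)
    (hinj : Function.Injective (⇑T))
    (V : ℕ → Submodule ℂ H)
    (hfd : ∀ N, FiniteDimensional ℂ (V N))
    (hmono : Monotone V)
    (hdense : Dense (⋃ N, (V N : Set H))) :
    ∃ (N₀ : ℕ) (C : ℝ), 0 < C ∧ ∀ N, N₀ ≤ N → ∀ f : H,
      (∃! uN : V N, ∀ w ∈ V N, (inner ℂ (T (uN : H)) w : ℂ) = inner ℂ f w) ∧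
      ∀ (u : H) (uN : V N), T u = f →
        (∀ w ∈ V N, (inner ℂ (T (uN : H)) w : ℂ) = inner ℂ f w) →
        ‖(uN : H) - u‖ ≤ C * Metric.infDist u (V N : Set H) := by
  classical
  obtain ⟨K, hKcpt, hG⟩ := hGarding
  set S : H →L[ℂ] H := T + K with hSdef
  have hcoer : ∀ v : H, ‖v‖ ^ 2 ≤ ((inner ℂ (S v) v : ℂ)).re := by
    intro v
    have := hG v
    have hSv : S v = T v + K v := rfl
    rw [hSv, inner_add_left]
    simp only [Complex.add_re]
    linarith
  have hTS : ∀ v : H, T v = S v - K v := by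
    intro v; simp [hSdef]
  -- the Galerkin solution operators for S
  have exg : ∀ (N : ℕ) (g : H), ∃ v : H, v ∈ V N ∧
      ∀ w ∈ V N, (inner ℂ (S v) w : ℂ) = inner ℂ g w := by
    intro N g
    haveI := hfd N
    exact gq_exists S hcoer (V N) g
  choose G hGmem hGeq using exg
  have hGchar : ∀ (N : ℕ) (g v : H), v ∈ V N →
      (∀ w ∈ V N, (inner ℂ (S v) w : ℂ) = inner ℂ g w) → v = G N g := by
    intro N g v hv hvo
    have h0 : ∀ w ∈ V N, (inner ℂ (S (v - G N g)) w : ℂ) = 0 := by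
      intro w hw
      rw [map_sub, inner_sub_left, hvo w hw, hGeq N g w hw, sub_self]
    have := gq_zero S hcoer (v - G N g) (h0 _ (Submodule.sub_mem _ hv (hGmem N g)))
    exact sub_eq_zero.mp this
  have hGadd : ∀ (N : ℕ) (g g' : H), G N (g + g') = G N g + G N g' := by
    intro N g g'
    refine (hGchar N (g + g') (G N g + G N g')
      (Submodule.add_mem _ (hGmem N g) (hGmem N g')) fun w hw => ?_).symm
    rw [map_add, inner_add_left, hGeq N g w hw, hGeq N g' w hw, inner_add_left]
  have hGsub : ∀ (N : ℕ) (g g' : H), G N (g - g') = G N g - G N g' := by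
    intro N g g'
    refine (hGchar N (g - g') (G N g - G N g')
      (Submodule.sub_mem _ (hGmem N g) (hGmem N g')) fun w hw => ?_).symm
    rw [map_sub, inner_sub_left, hGeq N g w hw, hGeq N g' w hw, inner_sub_left]
  have hGsmul : ∀ (N : ℕ) (c : ℂ) (g : H), G N (c • g) = c • G N g := by
    intro N c g
    refine (hGchar N (c • g) (c • G N g)
      (Submodule.smul_mem _ c (hGmem N g)) fun w hw => ?_).symm
    rw [map_smul, inner_smul_left, hGeq N g w hw, inner_smul_left]
  have hGnorm : ∀ (N : ℕ) (g : H), ‖G N g‖ ≤ ‖g‖ := by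
    intro N g
    have h1 : ‖G N g‖ ^ 2 ≤ ((inner ℂ (S (G N g)) (G N g) : ℂ)).re := hcoer _
    have h2 : (inner ℂ (S (G N g)) (G N g) : ℂ) = inner ℂ g (G N g) :=
      hGeq N g _ (hGmem N g)
    have h3 : ((inner ℂ g (G N g) : ℂ)).re ≤ ‖g‖ * ‖G N g‖ :=
      le_trans (gq_re_le _) (norm_inner_le_norm _ _)
    rcases eq_or_lt_of_le (norm_nonneg (G N g)) with h | h
    · rw [← h]; exact norm_nonneg _
    · nlinarith [h2 ▸ h1]
  have hCea : ∀ (N : ℕ) (u : H),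
      ‖G N (S u) - u‖ ≤ (‖S‖ + 1) * Metric.infDist u ((V N : Set H)) := by
    intro N u
    refine gq_cea S hcoer (V N) u (G N (S u)) (hGmem N (S u)) fun w hw => ?_
    rw [map_sub, inner_sub_left, hGeq N (S u) w hw, sub_self]
  have htend := gq_tendsto V hmono hdense
  -- the key uniform stability estimate
  have key : ∃ c : ℝ, 0 < c ∧ ∃ N₁ : ℕ, ∀ N, N₁ ≤ N →
      ∀ v : H, c * ‖v‖ ≤ ‖v - G N (K v)‖ := by
    by_contra hcon
    push_neg at hcon
    have hsel : ∀ n : ℕ, ∃ N, n ≤ N ∧ ∃ v : H,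
        ‖v - G N (K v)‖ < (1 / (n + 1 : ℝ)) * ‖v‖ := by
      intro n
      obtain ⟨N, hN, v, hv⟩ := hcon (1 / (n + 1 : ℝ)) (by positivity) n
      exact ⟨N, hN, v, hv⟩
    choose Nn hNn vsel hvsel using hsel
    have hvpos : ∀ n, 0 < ‖vsel n‖ := by
      intro n
      by_contra hle
      push_neg at hle
      have h0 : ‖vsel n‖ = 0 := le_antisymm hle (norm_nonneg _)
      have := hvsel n
      rw [h0, mul_zero] at this
      exact absurd this (not_lt.mpr (norm_nonneg _))
    set w : ℕ → H := fun n => ((‖vsel n‖⁻¹ : ℝ) : ℂ) • vsel n with hwdef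
    have hwnorm : ∀ n, ‖w n‖ = 1 := by
      intro n
      rw [hwdef]
      simp only [norm_smul, Complex.norm_real, Real.norm_eq_abs,
        abs_of_pos (inv_pos.mpr (hvpos n))]
      rw [inv_mul_cancel₀ (hvpos n).ne']
    have hwbound : ∀ n, ‖w n - G (Nn n) (K (w n))‖ < 1 / (n + 1 : ℝ) := by
      intro n
      have heq : w n - G (Nn n) (K (w n)) =
          ((‖vsel n‖⁻¹ : ℝ) : ℂ) • (vsel n - G (Nn n) (K (vsel n))) := by
        rw [hwdef]
        simp only [map_smul, hGsmul, smul_sub]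
      rw [heq, norm_smul]
      have : ‖((‖vsel n‖⁻¹ : ℝ) : ℂ)‖ = ‖vsel n‖⁻¹ := by
        simp [abs_of_pos (inv_pos.mpr (hvpos n))]
      rw [this]
      have h1 := hvsel n
      have h2 : ‖vsel n‖⁻¹ * ‖vsel n - G (Nn n) (K (vsel n))‖ <
          ‖vsel n‖⁻¹ * ((1 / (n + 1 : ℝ)) * ‖vsel n‖) :=
        mul_lt_mul_of_pos_left h1 (inv_pos.mpr (hvpos n))
      calc ‖vsel n‖⁻¹ * ‖vsel n - G (Nn n) (K (vsel n))‖
          < ‖vsel n‖⁻¹ * ((1 / (n + 1 : ℝ)) * ‖vsel n‖) := h2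
        _ = 1 / (n + 1 : ℝ) := by
            rw [mul_comm (1 / ((n : ℝ) + 1)) ‖vsel n‖, ← mul_assoc,
              inv_mul_cancel₀ (hvpos n).ne', one_mul]
    -- compactness: extract a convergent subsequence of (K (w n))
    obtain ⟨Cset, hCcpt, hCsub⟩ :
        ∃ Cset : Set H, IsCompact Cset ∧ ⇑K '' Metric.closedBall 0 1 ⊆ Cset := by
      obtain ⟨Cs, hCs, hsub⟩ :=
        hKcpt.image_subset_compact_of_isVonNBounded (𝕜₁ := ℂ)
          (f := (K : H →ₗ[ℂ] H)) (NormedSpace.isVonNBounded_closedBall ℂ H 1)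
      exact ⟨Cs, hCs, hsub⟩
    have hmem : ∀ n, K (w n) ∈ Cset := by
      intro n
      apply hCsub
      exact ⟨w n, by simp [Metric.mem_closedBall, (hwnorm n).le, dist_zero_right,
        hwnorm n], rfl⟩
    obtain ⟨y, hyC, φ, hφ, hconvK⟩ := hCcpt.tendsto_subseq hmem
    obtain ⟨z, hz⟩ := gq_surj S hcoer y
    -- G (Nn (φ n)) y → z
    have hconv1 : Tendsto (fun n => G (Nn (φ n)) y) atTop (𝓝 z) := by
      rw [tendsto_iff_norm_sub_tendsto_zero]
      have hb : ∀ n, ‖G (Nn (φ n)) y - z‖ ≤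
          (‖S‖ + 1) * Metric.infDist z ((V n : Set H)) := by
        intro n
        have h1 : ‖G (Nn (φ n)) y - z‖ ≤
            (‖S‖ + 1) * Metric.infDist z ((V (Nn (φ n)) : Set H)) := by
          have := hCea (Nn (φ n)) z
          rwa [hz] at this
        have hle : n ≤ Nn (φ n) := le_trans (hφ.le_apply) (hNn (φ n))
        have h2 : Metric.infDist z ((V (Nn (φ n)) : Set H)) ≤
            Metric.infDist z ((V n : Set H)) :=
          Metric.infDist_le_infDist_of_subset (hmono hle) ⟨0, (V n).zero_mem⟩
        have hS1 : (0 : ℝ) ≤ ‖S‖ + 1 := by positivity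
        nlinarith
      have hb0 : Tendsto (fun n => (‖S‖ + 1) * Metric.infDist z ((V n : Set H)))
          atTop (𝓝 0) := by
        have := (htend z).const_mul (‖S‖ + 1)
        simpa using this
      exact squeeze_zero (fun n => norm_nonneg _) hb hb0
    -- w (φ n) → z
    have hconv2 : Tendsto (fun n => w (φ n)) atTop (𝓝 z) := by
      have hdecomp : ∀ n, w (φ n) =
          (w (φ n) - G (Nn (φ n)) (K (w (φ n)))) +
          (G (Nn (φ n)) (K (w (φ n))) - G (Nn (φ n)) y) + G (Nn (φ n)) y := by
        intro n; abel
      have hA : Tendsto (fun n => w (φ n) - G (Nn (φ n)) (K (w (φ n)))) atTop (𝓝 0) := by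
        have hAb : ∀ n : ℕ, ‖w (φ n) - G (Nn (φ n)) (K (w (φ n)))‖ ≤ 1 / (n + 1 : ℝ) := by
          intro n
          have h1 := (hwbound (φ n)).le
          have hle : (n : ℝ) ≤ (φ n : ℝ) := by exact_mod_cast hφ.le_apply
          have h2 : 1 / ((φ n : ℝ) + 1) ≤ 1 / ((n : ℝ) + 1) :=
            one_div_le_one_div_of_le (by positivity) (by linarith)
          linarith
        exact squeeze_zero_norm hAb tendsto_one_div_add_atTop_nhds_zero_nat
      have hB : Tendsto (fun n => G (Nn (φ n)) (K (w (φ n))) - G (Nn (φ n)) y)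
          atTop (𝓝 0) := by
        have hBb : ∀ n : ℕ, ‖G (Nn (φ n)) (K (w (φ n))) - G (Nn (φ n)) y‖ ≤
            ‖K (w (φ n)) - y‖ := by
          intro n
          rw [← hGsub]
          exact hGnorm _ _
        exact squeeze_zero_norm hBb (tendsto_iff_norm_sub_tendsto_zero.mp hconvK)
      have := (hA.add hB).add hconv1
      simp only [zero_add] at this
      convert this using 1
      funext n
      exact hdecomp n
    have hz1 : ‖z‖ = 1 := by
      have h1 : Tendsto (fun n => ‖w (φ n)‖) atTop (𝓝 ‖z‖) := hconv2.norm
      have h2 : Tendsto (fun n => ‖w (φ n)‖) atTop (𝓝 1) := by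
        simp only [hwnorm]
        exact tendsto_const_nhds
      exact tendsto_nhds_unique h1 h2
    have hKz : K z = y :=
      tendsto_nhds_unique ((K.continuous.tendsto z).comp hconv2) hconvK
    have hTz : T z = 0 := by rw [hTS, hz, hKz, sub_self]
    have : z = 0 := hinj (by rw [hTz, map_zero])
    rw [this, norm_zero] at hz1
    exact one_ne_zero hz1.symm
  obtain ⟨c, hc, N₁, hstab⟩ := key
  refine ⟨N₁, (‖S‖ + 1) / c, div_pos (by positivity) hc, fun N hN f => ?_⟩
  haveI := hfd N
  -- converse: Galerkin solution satisfies the fixed point equation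
  have hconvz : ∀ (f' : H) (x : H), x ∈ V N →
      (∀ w ∈ V N, (inner ℂ (T x) w : ℂ) = inner ℂ f' w) → x = G N (K x + f') := by
    intro f' x hx hgal
    refine hGchar N (K x + f') x hx fun w hw => ?_
    have hSx : S x = T x + K x := rfl
    rw [hSx, inner_add_left, hgal w hw, inner_add_left]
    ring
  constructor
  · -- existence and uniqueness
    let A : V N →ₗ[ℂ] V N :=
      { toFun := fun v => v - ⟨G N (K (v : H)), hGmem N _⟩
        map_add' := by
          intro a b
          apply Subtype.ext
          simp only [Submodule.coe_sub, Submodule.coe_add]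
          rw [map_add, hGadd]
          abel
        map_smul' := by
          intro cc a
          apply Subtype.ext
          simp only [Submodule.coe_sub, Submodule.coe_smul, RingHom.id_apply]
          rw [map_smul, hGsmul]
          exact (smul_sub cc _ _).symm }
    have hAinj : Function.Injective A := by
      rw [← LinearMap.ker_eq_bot]
      apply LinearMap.ker_eq_bot'.mpr
      intro v hv
      have h0 : (v : H) - G N (K (v : H)) = 0 := by
        have := congrArg (Subtype.val) hv
        simpa [A] using this
      have h1 := hstab N hN (v : H)
      rw [h0, norm_zero] at h1
      have : ‖(v : H)‖ = 0 := le_antisymm (by nlinarith) (norm_nonneg _)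
      exact Subtype.ext (norm_eq_zero.mp this)
    obtain ⟨uN, huN⟩ := (LinearMap.injective_iff_surjective).mp hAinj
      ⟨G N f, hGmem N f⟩
    have hfix : (uN : H) - G N (K (uN : H)) = G N f := by
      have := congrArg (Subtype.val) huN
      simpa [A] using this
    have hfix2 : (uN : H) = G N (K (uN : H) + f) := by
      rw [hGadd]
      rw [← hfix]
      abel
    have hgal : ∀ w ∈ V N, (inner ℂ (T (uN : H)) w : ℂ) = inner ℂ f w := by
      intro w hw
      have h1 : (inner ℂ (S (uN : H)) w : ℂ) = inner ℂ (K (uN : H) + f) w := by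
        conv_lhs => rw [hfix2]
        exact hGeq N _ w hw
      have hT : T (uN : H) = S (uN : H) - K (uN : H) := hTS _
      rw [hT, inner_sub_left, h1, inner_add_left]
      ring
    refine ⟨uN, hgal, fun x hx => ?_⟩
    -- uniqueness
    have h1 := hconvz f (x : H) x.2 hx
    have h2 := hconvz f (uN : H) uN.2 hgal
    have hd : ((x : H) - (uN : H)) - G N (K ((x : H) - (uN : H))) = 0 := by
      have : (x : H) - (uN : H) = G N (K (x : H) + f) - G N (K (uN : H) + f) := by
        rw [← h1, ← h2]
      rw [← hGsub] at this
      have harg : (K (x : H) + f) - (K (uN : H) + f) = K ((x : H) - (uN : H)) := by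
        rw [map_sub]; abel
      rw [harg] at this
      rw [← this]
      exact sub_self _
    have h3 := hstab N hN ((x : H) - (uN : H))
    rw [hd, norm_zero] at h3
    have : ‖(x : H) - (uN : H)‖ = 0 := le_antisymm (by nlinarith) (norm_nonneg _)
    exact Subtype.ext (sub_eq_zero.mp (norm_eq_zero.mp this))
  · -- the quasi-optimal error estimate
    intro u uN hu hgal
    have h1 : (uN : H) = G N (K (uN : H) + f) := hconvz f (uN : H) uN.2 hgal
    have hf : f = S u - K u := by rw [← hu, hTS]
    have harg : K (uN : H) + f = K ((uN : H) - u) + S u := by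
      rw [hf, map_sub]; abel
    have h2 : (uN : H) = G N (K ((uN : H) - u)) + G N (S u) := by
      conv_lhs => rw [h1, harg, hGadd]
    have h3gen : ∀ A : H, (uN : H) = A + G N (S u) →
        ((uN : H) - u) - A = G N (S u) - u := by
      intro A hA
      rw [hA]
      abel
    have h3 : ((uN : H) - u) - G N (K ((uN : H) - u)) = G N (S u) - u :=
      h3gen _ h2
    have h4 := hstab N hN ((uN : H) - u)
    rw [h3] at h4
    have h5 := hCea N u
    have h6 : c * ‖(uN : H) - u‖ ≤ (‖S‖ + 1) * Metric.infDist u ((V N : Set H)) :=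
      le_trans h4 h5
    rw [div_mul_eq_mul_div, le_div_iff₀ hc]
    nlinarith
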